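/- For every j ≥ 3, Σ_{k=1}^{j-1} m_{j-k+1} · (n_{j-1} · n_{j-2} · ⋯ · n_{j-k}) ≤ 3 · p_j, where p_j = n_1 · ⋯ · n_{j-1}. -/

import Mathlib

/-- With `m 1 = m 2 = 2`, `m j = (m (j-1))^2` for `j ≥ 3`, and
`n i ≥ 2^(i+2) * m (i+2)` for all `i ≥ 1`, for every `j ≥ 3` we have
`Σ_{k=1}^{j-1} m (j-k+1) * (n (j-1) * n (j-2) * ⋯ * n (j-k)) ≤ 3 * p j`,
where `p j = n 1 * ⋯ * n (j-1)`. -/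
theorem stmt5 (m n : ℕ → ℕ) (hm1 : m 1 = 2) (hm2 : m 2 = 2)
    (hmrec : ∀ j, 3 ≤ j → m j = (m (j - 1)) ^ 2)
    (hn : ∀ i, 1 ≤ i → 2 ^ (i + 2) * m (i + 2) ≤ n i)
    (p : ℕ → ℕ) (hp : ∀ j, p j = ∏ i ∈ Finset.Icc 1 (j - 1), n i) :
    ∀ j, 3 ≤ j →
      ∑ k ∈ Finset.Icc 1 (j - 1),
        m (j - k + 1) * ∏ i ∈ Finset.Icc (j - k) (j - 1), n i ≤ 3 * p j := by
  intro j hj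
  have hm : ∀ t, 1 ≤ t → 2 ≤ m t := by
    intro t
    induction t using Nat.strong_induction_on with
    | _ t ih =>
      intro ht
      rcases Nat.lt_or_ge t 3 with h | h
      · interval_cases t
        · exact hm1.ge
        · exact hm2.ge
      · rw [hmrec t h]
        have h2 := ih (t - 1) (by omega) (by omega)
        nlinarith
  have hnpos : ∀ i, 1 ≤ i → 1 ≤ n i := by
    intro i hi
    have h1 := hn i hi
    have h2 := hm (i + 2) (by omega)
    have h3 : 0 < 2 ^ (i + 2) := Nat.pow_pos (by norm_num)
    nlinarith
  set T := fun l => m (l + 1) * ∏ i ∈ Finset.Icc l (j - 1), n i with hT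
  have key : ∀ l, 2 ≤ l → l ≤ j - 1 → 2 ^ (l + 1) * T l ≤ p j := by
    intro l hl2 hlj
    rw [hp]
    have hsplit : (∏ i ∈ Finset.Icc 1 (j - 1), n i)
        = (∏ i ∈ Finset.Icc 1 (l - 1), n i) * ∏ i ∈ Finset.Icc l (j - 1), n i := by
      rw [← Finset.prod_union]
      · congr 1
        ext x
        simp only [Finset.mem_Icc, Finset.mem_union]
        omega
      · rw [Finset.disjoint_left]
        intro a ha hb
        simp only [Finset.mem_Icc] at ha hb
        omega
    rw [hsplit]
    have h1 : n (l - 1) ≤ ∏ i ∈ Finset.Icc 1 (l - 1), n i := by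
      apply Finset.single_le_prod'
      · intro i hi
        simp only [Finset.mem_Icc] at hi
        exact hnpos i hi.1
      · simp only [Finset.mem_Icc]; omega
    have h2 : 2 ^ (l + 1) * m (l + 1) ≤ n (l - 1) := by
      have h := hn (l - 1) (by omega)
      have he : l - 1 + 2 = l + 1 := by omega
      rw [he] at h
      exact h
    calc 2 ^ (l + 1) * T l
        = (2 ^ (l + 1) * m (l + 1)) * ∏ i ∈ Finset.Icc l (j - 1), n i := by
          rw [hT]; ring
      _ ≤ (∏ i ∈ Finset.Icc 1 (l - 1), n i) * ∏ i ∈ Finset.Icc l (j - 1), n i := by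
          exact Nat.mul_le_mul_right _ (le_trans h2 h1)
  have geo : ∀ d L, 2 ≤ L → j ≤ L + d →
      2 ^ L * ∑ l ∈ Finset.Icc L (j - 1), T l ≤ p j := by
    intro d
    induction d with
    | zero =>
      intro L hL2 hLj
      have he : Finset.Icc L (j - 1) = ∅ := by
        rw [Finset.Icc_eq_empty]; omega
      simp [he]
    | succ d ih =>
      intro L hL2 hLj
      rcases le_or_gt j (L + d) with h | h
      · exact ih L hL2 h
      · have hLle : L ≤ j - 1 := by omega
        have hins : Finset.Icc L (j - 1) = insert L (Finset.Icc (L + 1) (j - 1)) := by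
          ext x
          simp only [Finset.mem_Icc, Finset.mem_insert]
          omega
        rw [hins, Finset.sum_insert (by simp only [Finset.mem_Icc]; omega)]
        have hA := key L hL2 hLle
        have hB := ih (L + 1) (by omega) (by omega)
        have heq : 2 * (2 ^ L * (T L + ∑ l ∈ Finset.Icc (L + 1) (j - 1), T l))
            = 2 ^ (L + 1) * T L + 2 ^ (L + 1) * ∑ l ∈ Finset.Icc (L + 1) (j - 1), T l := by
          ring
        linarith
  have hS2 : ∑ l ∈ Finset.Icc 2 (j - 1), T l ≤ p j := by
    have h4 := geo (j - 2) 2 le_rfl (by omega)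
    have hle : ∑ l ∈ Finset.Icc 2 (j - 1), T l
        ≤ 2 ^ 2 * ∑ l ∈ Finset.Icc 2 (j - 1), T l :=
      Nat.le_mul_of_pos_left _ (by norm_num)
    exact le_trans hle h4
  have hre : ∑ k ∈ Finset.Icc 1 (j - 1),
      m (j - k + 1) * ∏ i ∈ Finset.Icc (j - k) (j - 1), n i
      = ∑ l ∈ Finset.Icc 1 (j - 1), T l := by
    apply Finset.sum_nbij' (i := fun k => j - k) (j := fun l => j - l)
    · intro a ha; simp only [Finset.mem_Icc] at *; omega
    · intro a ha; simp only [Finset.mem_Icc] at *; omega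
    · intro a ha; simp only [Finset.mem_Icc] at ha; omega
    · intro a ha; simp only [Finset.mem_Icc] at ha; omega
    · intro a ha; rfl
  rw [hre]
  have hins1 : Finset.Icc 1 (j - 1) = insert 1 (Finset.Icc 2 (j - 1)) := by
    ext x
    simp only [Finset.mem_Icc, Finset.mem_insert]
    omega
  rw [hins1, Finset.sum_insert (by simp only [Finset.mem_Icc]; omega)]
  have hT1 : T 1 = 2 * p j := by
    rw [hT, hp]
    simp only [hm2]
  linarith
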